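/- Bin packing with two capacities reduces to uniform-capacity bin packing via fill items: given items a₁,…,a_n, a number of bins k, a capacity B′ ≥ 1, and 0 ≤ r′ ≤ k, the items can be partitioned into r′ bins each of total size at most B′ − 1 and k − r′ bins each of total size at most B′, if and only if the multiset consisting of a₁,…,a_n together with r′ fill items of size B′ + 2 and k − r′ fill items of size B′ + 1 can be partitioned into k bins each of total size at most 2B′ + 1 — provided every item aᵢ satisfies aᵢ ≥ 1 and aᵢ ≤ B′. -/

import Mathlib

private lemma split_sum {n k : ℕ} (Q : (Fin n ⊕ Fin k) → Fin k)
    (f : (Fin n ⊕ Fin k) → ℕ) (b : Fin k) :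
    (∑ x ∈ Finset.univ.filter fun x => Q x = b, f x) =
      (∑ i : Fin n, if Q (Sum.inl i) = b then f (Sum.inl i) else 0) +
      (∑ j : Fin k, if Q (Sum.inr j) = b then f (Sum.inr j) else 0) := by
  rw [Finset.sum_filter, Fintype.sum_sum_type]

theorem two_capacity_bin_packing_via_fill_items
    (n k B' r' : ℕ) (hB' : 1 ≤ B') (hr' : r' ≤ k)
    (a : Fin n → ℕ) (ha1 : ∀ i, 1 ≤ a i) (ha2 : ∀ i, a i ≤ B') :
    (∃ P : Fin n → Fin k, ∀ b : Fin k,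
      ((b : ℕ) < r' →
        (∑ i ∈ Finset.univ.filter fun i => P i = b, a i) ≤ B' - 1) ∧
      (r' ≤ (b : ℕ) →
        (∑ i ∈ Finset.univ.filter fun i => P i = b, a i) ≤ B')) ↔
    (∃ Q : (Fin n ⊕ Fin k) → Fin k, ∀ b : Fin k,
      (∑ x ∈ Finset.univ.filter fun x => Q x = b,
        Sum.elim a (fun j : Fin k => if (j : ℕ) < r' then B' + 2 else B' + 1) x)
        ≤ 2 * B' + 1) := by
  set fill : Fin k → ℕ := fun j => if (j : ℕ) < r' then B' + 2 else B' + 1 with hfill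
  constructor
  · rintro ⟨P, hP⟩
    refine ⟨Sum.elim P id, fun b => ?_⟩
    rw [split_sum]
    have h2 : (∑ j : Fin k, if (Sum.elim P id (Sum.inr j) : Fin k) = b then
        Sum.elim a fill (Sum.inr j) else 0) = fill b := by
      simp
      exact Finset.sum_ite_eq_of_mem' _ _ _ (Finset.mem_univ b)
    have h1 : (∑ i : Fin n, if (Sum.elim P id (Sum.inl i) : Fin k) = b then
        Sum.elim a fill (Sum.inl i) else 0) =
        ∑ i ∈ Finset.univ.filter fun i => P i = b, a i := by
      rw [Finset.sum_filter]; rfl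
    rw [h1, h2]
    by_cases hb : (b : ℕ) < r'
    · have := (hP b).1 hb
      simp only [hfill, if_pos hb]
      omega
    · have := (hP b).2 (le_of_not_gt hb)
      simp only [hfill, if_neg hb]
      omega
  · rintro ⟨Q, hQ⟩
    have hfge : ∀ j : Fin k, B' + 1 ≤ fill j := by
      intro j; simp only [hfill]; split <;> omega
    -- j ↦ Q (inr j) is injective
    have hinj : Function.Injective (fun j : Fin k => Q (Sum.inr j)) := by
      intro j j' hjj'
      by_contra hne
      have hsub : ({j, j'} : Finset (Fin k)) ⊆
          Finset.univ.filter fun j'' => Q (Sum.inr j'') = Q (Sum.inr j) := by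
        intro x hx
        simp only [Finset.mem_insert, Finset.mem_singleton] at hx
        rcases hx with rfl | rfl
        · simp
        · simp [← hjj']
      have hpair : fill j + fill j' ≤
          ∑ j'' ∈ Finset.univ.filter (fun j'' => Q (Sum.inr j'') = Q (Sum.inr j)), fill j'' := by
        rw [← Finset.sum_pair hne]
        exact Finset.sum_le_sum_of_subset hsub
      have hle := hQ (Q (Sum.inr j))
      rw [split_sum] at hle
      have h2 : ∑ j'' ∈ Finset.univ.filter (fun j'' => Q (Sum.inr j'') = Q (Sum.inr j)), fill j''
          = (∑ j'' : Fin k, if Q (Sum.inr j'') = Q (Sum.inr j) then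
              Sum.elim a fill (Sum.inr j'') else 0) := by
        rw [Finset.sum_filter]; rfl
      have hj := hfge j
      have hj' := hfge j'
      omega
    have hbij : Function.Bijective (fun j : Fin k => Q (Sum.inr j)) :=
      (Finite.injective_iff_bijective).mp hinj
    let σ : Fin k ≃ Fin k := Equiv.ofBijective _ hbij
    refine ⟨fun i => σ.symm (Q (Sum.inl i)), fun b => ?_⟩
    have hle := hQ (σ b)
    rw [split_sum] at hle
    have h1 : (∑ i : Fin n, if Q (Sum.inl i) = σ b then Sum.elim a fill (Sum.inl i) else 0) =
        ∑ i ∈ Finset.univ.filter fun i => σ.symm (Q (Sum.inl i)) = b, a i := by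
      simp only [Equiv.symm_apply_eq, Finset.sum_filter]
      rfl
    have h2 : (∑ j : Fin k, if Q (Sum.inr j) = σ b then Sum.elim a fill (Sum.inr j) else 0)
        = fill b := by
      have heq : ∀ j : Fin k, (Q (Sum.inr j) = σ b) ↔ j = b := by
        intro j
        constructor
        · intro h; exact hinj h
        · intro h; rw [h]; rfl
      simp only [heq, Sum.elim_inr]
      simp
    rw [h1, h2] at hle
    constructor
    · intro hb
      show (∑ i ∈ Finset.univ.filter fun i => σ.symm (Q (Sum.inl i)) = b, a i) ≤ B' - 1
      simp only [hfill, if_pos hb] at hle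
      omega
    · intro hb
      show (∑ i ∈ Finset.univ.filter fun i => σ.symm (Q (Sum.inl i)) = b, a i) ≤ B'
      simp only [hfill, if_neg (not_lt.mpr hb)] at hle
      omega
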